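/- Let X₁,…,Xₘ be m i.i.d. real random variables each satisfying Pr(|Xᵢ| > y) ≤ 1/y^α for all y > 0, where α > 0. Let Y be a median of X₁,…,Xₘ. Then Pr(|Y| ≤ 4^(1/α)) ≥ 1 − 2·exp(−m/8). -/

import Mathlib

open MeasureTheory ProbabilityTheory Real

/-- `y` is a median of the values `v i`: at least `⌈m/2⌉` of the values are `≤ y`
and at least `⌈m/2⌉` are `≥ y`. -/
def IsMedian {m : ℕ} (v : Fin m → ℝ) (y : ℝ) : Prop :=
  (m + 1) / 2 ≤ (Finset.univ.filter (fun i => v i ≤ y)).card ∧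
  (m + 1) / 2 ≤ (Finset.univ.filter (fun i => y ≤ v i)).card

lemma exp_quarter_le : Real.exp (1/4 : ℝ) ≤ 4/3 := by
  have h1 : Real.exp 1 < 2.7182818286 := Real.exp_one_lt_d9
  have h2 : Real.exp (1/4 : ℝ) ^ 4 = Real.exp 1 := by
    rw [← Real.exp_nat_mul]; norm_num
  have h3 : (0:ℝ) < Real.exp (1/4) := Real.exp_pos _
  nlinarith [sq_nonneg (Real.exp (1/4) - 4/3), sq_nonneg (Real.exp (1/4) + 4/3),
    sq_nonneg (Real.exp (1/4))]

theorem stmt0 {Ω : Type*} [MeasureSpace Ω] [IsProbabilityMeasure (ℙ : Measure Ω)]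
    (α : ℝ) (hα : 0 < α) (m : ℕ) (hm : 0 < m)
    (X : Fin m → Ω → ℝ) (hmeas : ∀ i, Measurable (X i))
    (hindep : iIndepFun X ℙ)
    (hident : ∀ i j, IdentDistrib (X i) (X j) ℙ ℙ)
    (htail : ∀ i, ∀ y : ℝ, 0 < y → ℙ {ω | y < |X i ω|} ≤ ENNReal.ofReal (1 / y ^ α))
    (Y : Ω → ℝ) (hY : ∀ ω, IsMedian (fun i => X i ω) (Y ω)) :
    ENNReal.ofReal (1 - 2 * Real.exp (-(m : ℝ) / 8)) ≤
      ℙ {ω | |Y ω| ≤ (4 : ℝ) ^ (1 / α)} := by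
  classical
  set t : ℝ := (4 : ℝ) ^ (1 / α) with ht_def
  have ht_pos : 0 < t := Real.rpow_pos_of_pos (by norm_num) _
  -- tail probability is at most 1/4
  have htα : t ^ α = 4 := by
    rw [ht_def, ← Real.rpow_mul (by norm_num : (0:ℝ) ≤ 4), one_div,
      inv_mul_cancel₀ hα.ne', Real.rpow_one]
  have htail' : ∀ i, ℙ {ω | t < |X i ω|} ≤ ENNReal.ofReal (1/4) := by
    intro i
    have := htail i t ht_pos
    rwa [htα] at this
  -- indicator random variables
  set B : Fin m → Ω → ℝ := fun i ω => if t < |X i ω| then 1 else 0 with hB_def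
  have hBmeas : ∀ i, Measurable (B i) := by
    intro i
    have hset : MeasurableSet {ω | t < |X i ω|} := measurableSet_lt measurable_const (hmeas i).abs
    exact Measurable.ite hset measurable_const measurable_const
  have hBindep : iIndepFun B ℙ := by
    have := hindep.comp (fun _ (x : ℝ) => if t < |x| then (1:ℝ) else 0)
      (fun _ => Measurable.ite (measurableSet_lt measurable_const measurable_abs)
        measurable_const measurable_const)
    exact this
  set S : Ω → ℝ := fun ω => ∑ i, B i ω with hS_def
  have hS_eq : (∑ i, B i) = S := by funext ω; simp [hS_def]
  have hSmeas : Measurable S := by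
    rw [hS_def]; exact Finset.measurable_sum _ fun i _ => hBmeas i
  set s : ℝ := Real.log 3 with hs_def
  have hs_pos : 0 < s := Real.log_pos (by norm_num)
  have hexps : Real.exp s = 3 := Real.exp_log (by norm_num)
  -- exp (s * B i ω) = 1 + 2 * B i ω
  have hexpB : ∀ i, (fun ω => Real.exp (s * B i ω)) = fun ω => 1 + 2 * B i ω := by
    intro i
    funext ω
    by_cases h : t < |X i ω|
    · simp only [hB_def, if_pos h, mul_one, hexps]; norm_num
    · simp only [hB_def, if_neg h, mul_zero, Real.exp_zero]; norm_num
  have hBint : ∀ i, Integrable (B i) ℙ := by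
    intro i
    have : B i = Set.indicator {ω | t < |X i ω|} (fun _ => (1:ℝ)) := by
      funext ω; by_cases h : t < |X i ω| <;> simp [hB_def, h, Set.indicator_apply]
    rw [this]
    exact (integrable_const (1:ℝ)).indicator
      (measurableSet_lt measurable_const (hmeas i).abs)
  have hint : ∀ i, Integrable (fun ω => Real.exp (s * B i ω)) ℙ := by
    intro i
    rw [hexpB i]
    exact (integrable_const (1:ℝ)).add ((hBint i).const_mul 2)
  -- mgf of each B i
  have hp_le : ∀ i, (ℙ {ω | t < |X i ω|}).toReal ≤ 1/4 := by
    intro i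
    refine ENNReal.toReal_le_of_le_ofReal (by norm_num) (htail' i)
  have hmgfB : ∀ i, mgf (B i) ℙ s ≤ 3/2 := by
    intro i
    have hint1 : ∫ ω, B i ω ∂ℙ = (ℙ {ω | t < |X i ω|}).toReal := by
      have : B i = Set.indicator {ω | t < |X i ω|} (fun _ => (1:ℝ)) := by
        funext ω; by_cases h : t < |X i ω| <;> simp [hB_def, h, Set.indicator_apply]
      rw [this, integral_indicator_const _ (measurableSet_lt measurable_const (hmeas i).abs)]
      simp; rfl
    unfold mgf
    rw [hexpB i, integral_add (integrable_const 1) ((hBint i).const_mul 2),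
      integral_const, integral_const_mul, hint1]
    have := hp_le i
    simp only [probReal_univ, measure_univ, ENNReal.toReal_one, smul_eq_mul, mul_one]
    linarith
  have hmgfB_nonneg : ∀ i, 0 ≤ mgf (B i) ℙ s := fun i => mgf_nonneg
  -- Chernoff bound
  set E : Set Ω := {ω | (m : ℝ)/2 ≤ S ω} with hE_def
  have hEmeas : MeasurableSet E := measurableSet_le measurable_const hSmeas
  have hSint : Integrable (fun ω => Real.exp (s * S ω)) ℙ := by
    have := ProbabilityTheory.iIndepFun.integrable_exp_mul_sum (t := s) hBindep hBmeas
      (s := Finset.univ) (fun i _ => hint i)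
    rwa [hS_eq] at this
  have hcher : (ℙ E).toReal ≤ Real.exp (-s * ((m:ℝ)/2)) * mgf S ℙ s := by
    have := measure_ge_le_exp_mul_mgf (μ := ℙ) (X := S) ((m:ℝ)/2) hs_pos.le hSint
    exact this
  have hmgfS : mgf S ℙ s = ∏ i, mgf (B i) ℙ s := by
    have := hBindep.mgf_sum (t := s) hBmeas Finset.univ
    rwa [hS_eq] at this
  have hmgfS_le : mgf S ℙ s ≤ (3/2 : ℝ)^m := by
    rw [hmgfS]
    calc ∏ i, mgf (B i) ℙ s ≤ ∏ _i : Fin m, (3/2 : ℝ) :=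
          Finset.prod_le_prod (fun i _ => hmgfB_nonneg i) (fun i _ => hmgfB i)
      _ = (3/2 : ℝ)^m := by simp [div_pow]
  -- numeric bound
  set c : ℝ := Real.exp (-(s/2)) with hc_def
  have hc_pos : 0 < c := Real.exp_pos _
  have hc_sq : c^2 = 1/3 := by
    rw [hc_def, ← Real.exp_nat_mul]
    have : (2:ℕ) * (-(s/2)) = -s := by push_cast; ring
    rw [this, Real.exp_neg, hexps]
    norm_num
  have hkey : c * (3/2) ≤ Real.exp (-(1/8 : ℝ)) := by
    have h1 : (c * (3/2))^2 = 3/4 := by rw [mul_pow, hc_sq]; norm_num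
    have h2 : Real.exp (-(1/8:ℝ))^2 = Real.exp (-(1/4:ℝ)) := by
      rw [← Real.exp_nat_mul]; norm_num
    have h3 : (3/4 : ℝ) ≤ Real.exp (-(1/4:ℝ)) := by
      rw [Real.exp_neg, le_inv_comm₀ (by norm_num) (Real.exp_pos _)]
      calc Real.exp (1/4 : ℝ) ≤ 4/3 := exp_quarter_le
        _ = (3/4 : ℝ)⁻¹ := by norm_num
    nlinarith [Real.exp_pos (-(1/8:ℝ)), mul_pos hc_pos (show (0:ℝ) < 3/2 by norm_num)]
  have hEbound : (ℙ E).toReal ≤ Real.exp (-(m:ℝ)/8) := by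
    have h1 : Real.exp (-s * ((m:ℝ)/2)) = c^m := by
      rw [hc_def, ← Real.exp_nat_mul]
      congr 1; ring
    calc (ℙ E).toReal ≤ Real.exp (-s * ((m:ℝ)/2)) * mgf S ℙ s := hcher
      _ ≤ c^m * (3/2)^m := by
          rw [h1]
          exact mul_le_mul_of_nonneg_left hmgfS_le (pow_nonneg hc_pos.le m)
      _ = (c * (3/2))^m := by rw [mul_pow]
      _ ≤ Real.exp (-(1/8:ℝ))^m := pow_le_pow_left₀ (by positivity) hkey m
      _ = Real.exp (-(m:ℝ)/8) := by
          rw [← Real.exp_nat_mul]; congr 1; ring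
  have hE_le : ℙ E ≤ ENNReal.ofReal (Real.exp (-(m:ℝ)/8)) := by
    rw [ENNReal.le_ofReal_iff_toReal_le (measure_ne_top _ _) (Real.exp_pos _).le]
    exact hEbound
  -- inclusion: complement of good set is in E
  set A : Set Ω := {ω | |Y ω| ≤ t} with hA_def
  have hincl : Aᶜ ⊆ E := by
    intro ω hω
    simp only [hA_def, Set.mem_compl_iff, Set.mem_setOf_eq, not_le] at hω
    -- count of indices with t < |X i ω| is at least (m+1)/2
    have hcount : ((m + 1)/2 : ℕ) ≤ (Finset.univ.filter (fun i => t < |X i ω|)).card := by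
      rcases lt_abs.mp hω with h | h
      · refine le_trans (hY ω).2 (Finset.card_le_card ?_)
        intro i hi
        simp only [Finset.mem_filter, Finset.mem_univ, true_and] at hi ⊢
        exact lt_of_lt_of_le (lt_of_lt_of_le h hi) (le_abs_self _)
      · refine le_trans (hY ω).1 (Finset.card_le_card ?_)
        intro i hi
        simp only [Finset.mem_filter, Finset.mem_univ, true_and] at hi ⊢
        have h1 : t < -(X i ω) := lt_of_lt_of_le h (by linarith)
        exact lt_of_lt_of_le h1 (neg_le_abs _)
    have hsum : S ω = ((Finset.univ.filter (fun i => t < |X i ω|)).card : ℝ) := by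
      simp only [hS_def, hB_def, Finset.sum_apply]
      rw [Finset.sum_boole]
    simp only [hE_def, Set.mem_setOf_eq, hsum]
    have h2 : (m : ℝ) / 2 ≤ ((m+1)/2 : ℕ) := by
      have hh : m ≤ 2 * ((m+1)/2) := by omega
      have : (m : ℝ) ≤ 2 * (((m+1)/2 : ℕ) : ℝ) := by exact_mod_cast hh
      linarith
    exact le_trans h2 (by exact_mod_cast hcount)
  -- conclude
  have hunion : (1 : ENNReal) ≤ ℙ A + ℙ E := by
    calc (1 : ENNReal) = ℙ (Set.univ : Set Ω) := (measure_univ).symm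
      _ ≤ ℙ (A ∪ Aᶜ) := by rw [Set.union_compl_self]
      _ ≤ ℙ A + ℙ Aᶜ := measure_union_le _ _
      _ ≤ ℙ A + ℙ E := add_le_add_right (measure_mono hincl) _
  have : ENNReal.ofReal (1 - Real.exp (-(m:ℝ)/8)) ≤ ℙ A := by
    rw [ENNReal.ofReal_sub _ (Real.exp_pos _).le]
    simp only [ENNReal.ofReal_one]
    rw [tsub_le_iff_right]
    calc (1 : ENNReal) ≤ ℙ A + ℙ E := hunion
      _ ≤ ℙ A + ENNReal.ofReal (Real.exp (-(m:ℝ)/8)) := add_le_add_right hE_le _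
  refine le_trans ?_ this
  apply ENNReal.ofReal_le_ofReal
  have := Real.exp_pos (-(m:ℝ)/8)
  linarith
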